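/- If A ∈ M_n(ℂ) satisfies the reflection equation with the standard Uq(gl(n)) braid matrix (q generic) and A is diagonal, then A = λ Σ_{i=1}^{k} e^i_i for some λ ∈ ℂ and some 0 ≤ k ≤ n; that is, the diagonal solutions are exactly the matrices P_k with a constant λ in the first k diagonal positions and 0 elsewhere. -/
import Mathlib


open Matrix Kronecker

/-- The coefficient `s_{ik}`: `q - q⁻¹` if `i < k`, `q` if `i = k`, `0` if `i > k`. -/
noncomputable def sCoeff {n : ℕ} (q : ℂ) (i k : Fin n) : ℂ :=
  if (i : ℕ) < (k : ℕ) then q - q⁻¹ else if i = k then q else 0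

/-- The standard `U_q(gl(n))` braid matrix
`S = Σ_{i,k} s_{ik} e^i_i ⊗ e^k_k + Σ_{i≠j} e^i_j ⊗ e^j_i` on `ℂ^n ⊗ ℂ^n`. -/
noncomputable def braidS (n : ℕ) (q : ℂ) :
    Matrix (Fin n × Fin n) (Fin n × Fin n) ℂ :=
  fun p r =>
    (if p.1 = r.1 ∧ p.2 = r.2 then sCoeff q p.1 p.2 else 0) +
    (if p.1 ≠ p.2 ∧ r.1 = p.2 ∧ r.2 = p.1 then 1 else 0)

/-- `A₂ = 1 ⊗ A` on `ℂ^n ⊗ ℂ^n`. -/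
noncomputable def A2 {n : ℕ} (A : Matrix (Fin n) (Fin n) ℂ) :
    Matrix (Fin n × Fin n) (Fin n × Fin n) ℂ :=
  (1 : Matrix (Fin n) (Fin n) ℂ) ⊗ₖ A

/-- The reflection equation `S A₂ S A₂ = A₂ S A₂ S`. -/
noncomputable def RE (n : ℕ) (q : ℂ) (A : Matrix (Fin n) (Fin n) ℂ) : Prop :=
  braidS n q * A2 A * braidS n q * A2 A = A2 A * braidS n q * A2 A * braidS n q

/-- The diagonal solutions of the reflection equation are exactly the matrices
`P_k = λ Σ_{i=1}^{k} e^i_i`: a constant `λ` in the first `k` diagonal positions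
and `0` elsewhere. -/
theorem RE_diagonal_classification (n : ℕ) (hn : 1 ≤ n) (q : ℂ) (hq : q ≠ 0)
    (hq2 : q ^ 2 ≠ 1) (A : Matrix (Fin n) (Fin n) ℂ) (hA : RE n q A)
    (hdiag : ∀ i j : Fin n, i ≠ j → A i j = 0) :
    ∃ (lam : ℂ) (k : ℕ), k ≤ n ∧
      ∀ i j : Fin n, A i j = if i = j ∧ (i : ℕ) + 1 ≤ k then lam else 0 := by
  classical
  -- `A2 A` is the diagonal matrix with entries `A r.2 r.2`.
  have hd : A2 A = Matrix.diagonal (fun r : Fin n × Fin n => A r.2 r.2) := by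
    ext ⟨r1, r2⟩ ⟨t1, t2⟩
    simp only [A2, Matrix.kroneckerMap_apply, Matrix.diagonal_apply, Matrix.one_apply,
      Prod.mk.injEq]
    by_cases h1 : r1 = t1 <;> by_cases h2 : r2 = t2
    · simp [h1, h2]
    · simp [h1, h2, hdiag r2 t2 h2]
    · simp [h1, h2]
    · simp [h1, h2, hdiag r2 t2 h2]
  have hq' : q - q⁻¹ ≠ 0 := by
    intro h
    apply hq2
    have hq3 : q = q⁻¹ := sub_eq_zero.mp h
    have : q * q = q * q⁻¹ := by nth_rewrite 2 [hq3]; rfl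
    rw [mul_inv_cancel₀ hq] at this
    rw [sq]; exact this
  unfold RE at hA
  rw [hd] at hA
  -- key relation
  have key : ∀ i j : Fin n, (i : ℕ) < (j : ℕ) → A j j * (A i i - A j j) = 0 := by
    intro i j hij
    have hne : i ≠ j := fun h => by simp [h] at hij
    have hS : ∀ r : Fin n × Fin n,
        braidS n q (i, j) r * A r.2 r.2 * braidS n q r (j, i)
          = if r = (i, j) then (q - q⁻¹) * A j j else 0 := by
      intro r
      by_cases h1 : r = ((i, j) : Fin n × Fin n)
      · subst h1
        have s1 : braidS n q (i, j) (i, j) = q - q⁻¹ := by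
          simp [braidS, sCoeff, hij, hne]
        have s2 : braidS n q (i, j) (j, i) = 1 := by
          simp [braidS, sCoeff, hne, Nat.lt_asymm hij]
        simp [s1, s2]
      · by_cases h2 : r = ((j, i) : Fin n × Fin n)
        · subst h2
          have s3 : braidS n q (j, i) (j, i) = 0 := by
            simp [braidS, sCoeff, hne, hne.symm, Nat.lt_asymm hij]
          simp [s3, h1]
        · have s0 : braidS n q (i, j) r = 0 := by
            simp only [braidS]
            have c1 : ¬(((i, j) : Fin n × Fin n).1 = r.1 ∧ ((i, j) : Fin n × Fin n).2 = r.2) := by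
              rintro ⟨h3, h4⟩
              exact h1 (Prod.ext h3.symm h4.symm)
            have c2 : ¬(((i, j) : Fin n × Fin n).1 ≠ ((i, j) : Fin n × Fin n).2 ∧
                r.1 = ((i, j) : Fin n × Fin n).2 ∧ r.2 = ((i, j) : Fin n × Fin n).1) := by
              rintro ⟨-, h3, h4⟩
              exact h2 (Prod.ext h3 h4)
            rw [if_neg c1, if_neg c2, add_zero]
          simp [s0, h1]
    have hsum : (∑ r : Fin n × Fin n,
        braidS n q (i, j) r * A r.2 r.2 * braidS n q r (j, i))
          = (q - q⁻¹) * A j j := by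
      rw [Finset.sum_congr rfl (fun r _ => hS r)]
      simp
    have e1 : (braidS n q * Matrix.diagonal (fun r : Fin n × Fin n => A r.2 r.2) *
        braidS n q * Matrix.diagonal (fun r : Fin n × Fin n => A r.2 r.2)) (i, j) (j, i)
          = (q - q⁻¹) * A j j * A i i := by
      rw [Matrix.mul_diagonal, Matrix.mul_apply]
      simp only [Matrix.mul_diagonal]
      rw [hsum]
    have e2 : (Matrix.diagonal (fun r : Fin n × Fin n => A r.2 r.2) * braidS n q *
        Matrix.diagonal (fun r : Fin n × Fin n => A r.2 r.2) * braidS n q) (i, j) (j, i)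
          = A j j * ((q - q⁻¹) * A j j) := by
      rw [Matrix.mul_apply]
      simp only [Matrix.mul_diagonal, Matrix.diagonal_mul]
      rw [← hsum, Finset.mul_sum]
      apply Finset.sum_congr rfl
      intro r _
      ring
    have h := congrFun (congrFun hA (i, j)) (j, i)
    rw [e1, e2] at h
    have h0 : (q - q⁻¹) * (A j j * (A i i - A j j)) = 0 := by ring_nf; linear_combination h
    rcases mul_eq_zero.mp h0 with h | h
    · exact absurd h hq'
    · exact h
  -- monotonicity: nonzero values propagate downward
  have mono : ∀ i j : Fin n, (i : ℕ) ≤ (j : ℕ) → A j j ≠ 0 → A i i = A j j := by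
    intro i j hle hne0
    rcases lt_or_eq_of_le hle with h | h
    · rcases mul_eq_zero.mp (key i j h) with h0 | h0
      · exact absurd h0 hne0
      · exact sub_eq_zero.mp h0
    · rw [Fin.ext h]
  set F := Finset.univ.filter (fun j : Fin n => A j j ≠ 0) with hF
  refine ⟨A ⟨0, hn⟩ ⟨0, hn⟩, F.card, ?_, ?_⟩
  · exact le_trans (Finset.card_filter_le _ _) (by simp)
  have claim1 : ∀ j : Fin n, A j j ≠ 0 → (j : ℕ) < F.card := by
    intro j hne0
    have sub : Finset.Iic j ⊆ F := by
      intro m hm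
      rw [hF, Finset.mem_filter]
      refine ⟨Finset.mem_univ _, ?_⟩
      rw [mono m j (Fin.le_def.mp (Finset.mem_Iic.mp hm)) hne0]
      exact hne0
    have := Finset.card_le_card sub
    rw [Fin.card_Iic] at this
    omega
  have claim2 : ∀ j : Fin n, (j : ℕ) < F.card → A j j ≠ 0 := by
    intro j hlt
    by_contra h0
    have h0' : A j j = 0 := h0
    have sub : F ⊆ Finset.Iio j := by
      intro m hm
      rw [hF, Finset.mem_filter] at hm
      rw [Finset.mem_Iio]
      by_contra hmj
      have hmj' : (j : ℕ) ≤ (m : ℕ) := Fin.le_def.mp (not_lt.mp hmj)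
      exact hm.2 ((mono j m hmj' hm.2).symm.trans h0')
    have := Finset.card_le_card sub
    rw [Fin.card_Iio] at this
    omega
  intro i j
  by_cases hij : i = j
  · subst hij
    by_cases hk : (i : ℕ) + 1 ≤ F.card
    · have hne0 := claim2 i (by omega)
      have := mono ⟨0, hn⟩ i (Nat.zero_le _) hne0
      simp [hk, ← this]
    · have h0 : A i i = 0 := by
        by_contra h
        exact hk (claim1 i h)
      simp [hk, h0]
  · simp [hij, hdiag i j hij]
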